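/- arXiv:1401.2127 — 6 statements merged into one kernel-verified Lean document; each statement's English description precedes it below -/
import Mathlib

section
/- For all θ with 0 < θ ≤ π/4, the function g(β) = (cos β − sin β)/(cos(θ/2 − β) − sin(θ/2 + β)) is decreasing in β for 0 ≤ β ≤ θ/2, so it is maximized at β = 0 where it equals 1/(cos(θ/2) − sin(θ/2)). -/
open Real

lemma aux_pos (x : ℝ) (h0 : 0 ≤ x) (h1 : x < π / 4) : 0 < Real.cos x - Real.sin x := by
  have h1' : Real.sin x < Real.sin (π / 4) := by
    apply Real.sin_lt_sin_of_lt_of_le_pi_div_two (by linarith [Real.pi_pos]) (by linarith [Real.pi_pos]) h1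
  have h2' : Real.cos (π / 4) ≤ Real.cos x := by
    apply Real.cos_le_cos_of_nonneg_of_le_pi h0 (by linarith [Real.pi_pos]) h1.le
  rw [Real.sin_pi_div_four] at h1'
  rw [Real.cos_pi_div_four] at h2'
  linarith

lemma aux_factor (a b : ℝ) :
    Real.cos (a - b) - Real.sin (a + b) = (Real.cos a - Real.sin a) * (Real.cos b - Real.sin b) := by
  rw [Real.cos_sub, Real.sin_add]; ring

theorem stmt4 (θ : ℝ) (hθ0 : 0 < θ) (hθ : θ ≤ π / 4) :
    AntitoneOn (fun β : ℝ =>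
        (Real.cos β - Real.sin β) /
          (Real.cos (θ / 2 - β) - Real.sin (θ / 2 + β)))
      (Set.Icc 0 (θ / 2)) ∧
    (∀ β ∈ Set.Icc (0 : ℝ) (θ / 2),
      (Real.cos β - Real.sin β) /
          (Real.cos (θ / 2 - β) - Real.sin (θ / 2 + β)) ≤
        1 / (Real.cos (θ / 2) - Real.sin (θ / 2))) ∧
    (Real.cos 0 - Real.sin 0) /
        (Real.cos (θ / 2 - 0) - Real.sin (θ / 2 + 0)) =
      1 / (Real.cos (θ / 2) - Real.sin (θ / 2)) := by
  have hc : 0 < Real.cos (θ / 2) - Real.sin (θ / 2) :=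
    aux_pos _ (by linarith) (by linarith [Real.pi_pos])
  have key : ∀ β ∈ Set.Icc (0 : ℝ) (θ / 2),
      (Real.cos β - Real.sin β) /
          (Real.cos (θ / 2 - β) - Real.sin (θ / 2 + β)) =
        1 / (Real.cos (θ / 2) - Real.sin (θ / 2)) := by
    intro β hβ
    obtain ⟨h0, h1⟩ := hβ
    have hN : 0 < Real.cos β - Real.sin β :=
      aux_pos _ h0 (by linarith [Real.pi_pos])
    rw [aux_factor]
    rw [mul_comm, div_mul_eq_div_div, div_self hN.ne']
  refine ⟨?_, fun β hβ => (key β hβ).le, ?_⟩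
  · intro a ha b hb _
    simp only [key a ha, key b hb, le_refl]
  · exact key 0 ⟨le_refl 0, by linarith⟩
end

section
/- For all θ with 0 < θ ≤ 2π/7: (cos(θ/2) − sin(θ/4))/(cos(θ/4) − sin θ) = cos(θ/4)/(cos(θ/2) − sin(3θ/4)). -/
open Real

theorem stmt6 (θ : ℝ) (hθ0 : 0 < θ) (hθ : θ ≤ 2 * π / 7) :
    (Real.cos (θ / 2) - Real.sin (θ / 4)) / (Real.cos (θ / 4) - Real.sin θ) =
      Real.cos (θ / 4) / (Real.cos (θ / 2) - Real.sin (3 * θ / 4)) := by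
  have hπ : (0:ℝ) < π := Real.pi_pos
  have hθ5 : θ < 2 * π / 5 := lt_of_le_of_lt hθ (by nlinarith)
  have h1 : Real.cos (θ / 4) - Real.sin θ > 0 := by
    have : Real.sin θ = Real.cos (π / 2 - θ) := (Real.cos_pi_div_two_sub θ).symm
    rw [this]
    have hc : Real.cos (π / 2 - θ) < Real.cos (θ / 4) := by
      apply Real.cos_lt_cos_of_nonneg_of_le_pi (by positivity) (by nlinarith) (by nlinarith)
    linarith
  have h2 : Real.cos (θ / 2) - Real.sin (3 * θ / 4) > 0 := by
    have : Real.sin (3 * θ / 4) = Real.cos (π / 2 - 3 * θ / 4) :=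
      (Real.cos_pi_div_two_sub _).symm
    rw [this]
    have hc : Real.cos (π / 2 - 3 * θ / 4) < Real.cos (θ / 2) := by
      apply Real.cos_lt_cos_of_nonneg_of_le_pi (by positivity) (by nlinarith) (by nlinarith)
    linarith
  rw [div_eq_div_iff (by linarith) (by linarith)]
  obtain ⟨t, rfl⟩ : ∃ t, θ = 4 * t := ⟨θ / 4, by ring⟩
  rw [show 4 * t / 2 = 2 * t from by ring, show 4 * t / 4 = t from by ring,
    show 3 * (4 * t) / 4 = 2 * t + t from by ring,
    show (4 : ℝ) * t = 2 * (2 * t) from by ring,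
    Real.sin_add, Real.sin_two_mul, Real.cos_two_mul, Real.sin_two_mul, Real.cos_two_mul, Real.sin_two_mul]
  nlinarith [Real.sin_sq_add_cos_sq t]
end

section
/- For all θ with 0 < θ ≤ 2π/7 and all β with 0 ≤ β ≤ θ/2: (cos(θ/4 + β) − sin β)/(cos(θ/2 − β) − sin(3θ/4 + β)) = cos(θ/4)/(cos(θ/2) − sin(3θ/4)), provided the denominators are nonzero; i.e., the function of β is constant. -/
open Real

theorem stmt7 (θ β : ℝ) (hθ0 : 0 < θ) (hθ : θ ≤ 2 * π / 7)
    (hβ0 : 0 ≤ β) (hβ : β ≤ θ / 2)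
    (hden1 : Real.cos (θ / 2 - β) - Real.sin (3 * θ / 4 + β) ≠ 0)
    (hden2 : Real.cos (θ / 2) - Real.sin (3 * θ / 4) ≠ 0) :
    (Real.cos (θ / 4 + β) - Real.sin β) /
        (Real.cos (θ / 2 - β) - Real.sin (3 * θ / 4 + β)) =
      Real.cos (θ / 4) / (Real.cos (θ / 2) - Real.sin (3 * θ / 4)) := by
  rw [div_eq_div_iff hden1 hden2]
  rw [show θ / 2 - β = θ / 4 + θ / 4 - β by ring,
      show 3 * θ / 4 + β = θ / 4 + θ / 4 + (θ / 4 + β) by ring,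
      show θ / 2 = θ / 4 + θ / 4 by ring,
      show 3 * θ / 4 = θ / 4 + θ / 4 + θ / 4 by ring]
  simp only [Real.cos_add, Real.sin_add, Real.cos_sub, Real.sin_sub]
  linear_combination (Real.sin β * (Real.cos (θ / 4) ^ 2 - Real.sin (θ / 4) ^ 2)) *
    Real.sin_sq_add_cos_sq (θ / 4)
end

section
/- For all θ with 0 < θ ≤ 2π/7: (cos(θ/2) − sin(3θ/4))/(cos(θ/4) − sin θ) ≤ cos(θ/4)/(cos(θ/2) − sin(3θ/4)). -/
open Real

set_option maxHeartbeats 1000000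

theorem stmt8 (θ : ℝ) (hθ0 : 0 < θ) (hθ : θ ≤ 2 * π / 7) :
    (Real.cos (θ / 2) - Real.sin (3 * θ / 4)) / (Real.cos (θ / 4) - Real.sin θ) ≤
      Real.cos (θ / 4) / (Real.cos (θ / 2) - Real.sin (3 * θ / 4)) := by
  have hπ : (3.141592 : ℝ) < π := Real.pi_gt_d6
  have hπ' : π < 3.15  := by linarith [Real.pi_lt_d2]
  set x := θ / 4 with hx
  have hx0 : 0 < x := by positivity
  have hx14 : x ≤ π / 14 := by rw [hx]; linarith
  -- rewrite angles
  have e2 : θ / 2 = 2 * x := by rw [hx]; ring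
  have e3 : 3 * θ / 4 = 3 * x := by rw [hx]; ring
  have e4 : θ = 4 * x := by rw [hx]; ring
  rw [e2, e3, e4]
  -- positivity of the two denominators via sin strict mono
  have hmono := Real.strictMonoOn_sin
  have hx10 : x < π / 10 := lt_of_le_of_lt hx14 (by linarith)
  have hsin_lt : ∀ a b : ℝ, -(π/2) ≤ a → a < b → b ≤ π/2 → Real.sin a < Real.sin b := by
    intro a b ha hab hb
    exact hmono ⟨ha, le_trans hab.le hb⟩ ⟨le_trans ha hab.le, hb⟩ hab
  have hB : Real.sin (4 * x) < Real.cos x := by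
    rw [← Real.sin_pi_div_two_sub]
    exact hsin_lt _ _ (by linarith) (by linarith) (by linarith)
  have hA : Real.sin (3 * x) < Real.cos (2 * x) := by
    rw [← Real.sin_pi_div_two_sub]
    exact hsin_lt _ _ (by linarith) (by linarith) (by linarith)
  have hBpos : 0 < Real.cos x - Real.sin (4 * x) := by linarith
  have hApos : 0 < Real.cos (2 * x) - Real.sin (3 * x) := by linarith
  rw [div_le_div_iff₀ hBpos hApos]
  have hs : Real.sin x ≤ x := Real.sin_le hx0.le
  have hsle : Real.sin x ≤ 0.225 := by
    calc Real.sin x ≤ x := hs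
    _ ≤ π / 14 := hx14
    _ ≤ 0.225 := by linarith
  have hs0 : 0 < Real.sin x := Real.sin_pos_of_pos_of_lt_pi hx0 (by linarith)
  have pyth : Real.sin x ^ 2 + Real.cos x ^ 2 = 1 := Real.sin_sq_add_cos_sq x
  have c2 : Real.cos (2 * x) = 1 - 2 * Real.sin x ^ 2 := by
    rw [Real.cos_two_mul']; linarith [pyth]
  have s3 : Real.sin (3 * x) = 3 * Real.sin x - 4 * Real.sin x ^ 3 :=
    Real.sin_three_mul x
  have s4 : Real.sin (4 * x) =
      2 * (2 * Real.sin x * Real.cos x) * (1 - 2 * Real.sin x ^ 2) := by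
    have h42 : (4 : ℝ) * x = 2 * (2 * x) := by ring
    rw [h42, Real.sin_two_mul, Real.sin_two_mul, Real.cos_two_mul']
    linear_combination (4 * Real.sin x * Real.cos x) * pyth
  rw [c2, s3, s4]
  have hrhs : Real.cos x * (Real.cos x -
      2 * (2 * Real.sin x * Real.cos x) * (1 - 2 * Real.sin x ^ 2)) =
      (1 - Real.sin x ^ 2) * (1 - 4 * Real.sin x + 8 * Real.sin x ^ 3) := by
    linear_combination (1 - 4 * Real.sin x + 8 * Real.sin x ^ 3) * pyth
  rw [hrhs]
  set s := Real.sin x with hsdef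
  have h1 : 0 ≤ 1 - 3 * s - 4 * s ^ 2 := by nlinarith [hs0, hsle]
  have h2 : 0 ≤ 10 + 4 * s - 8 * s ^ 2 := by nlinarith [hs0, hsle]
  have key : 0 ≤ 2 * s * (1 - 3 * s - 4 * s ^ 2) + 2 * s ^ 4 * (10 + 4 * s - 8 * s ^ 2) := by
    have := mul_nonneg hs0.le h1
    have := mul_nonneg (pow_nonneg hs0.le 4) h2
    nlinarith
  nlinarith [key]
end

section
/- For all θ with 0 < θ ≤ 2π/7, the function h(β) = (cos(5θ/4 − β) − sin β)/(cos(θ/2 − β) − sin(5θ/4 − β)) is decreasing in β for 3θ/4 ≤ β ≤ 5θ/4, and hence is maximized at β = 3θ/4. -/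
open Real

theorem stmt9 (θ : ℝ) (hθ0 : 0 < θ) (hθ : θ ≤ 2 * π / 7) :
    AntitoneOn (fun β : ℝ =>
        (Real.cos (5 * θ / 4 - β) - Real.sin β) /
          (Real.cos (θ / 2 - β) - Real.sin (5 * θ / 4 - β)))
      (Set.Icc (3 * θ / 4) (5 * θ / 4)) ∧
    (∀ β ∈ Set.Icc (3 * θ / 4) (5 * θ / 4),
      (Real.cos (5 * θ / 4 - β) - Real.sin β) /
          (Real.cos (θ / 2 - β) - Real.sin (5 * θ / 4 - β)) ≤
        (Real.cos (5 * θ / 4 - 3 * θ / 4) - Real.sin (3 * θ / 4)) /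
          (Real.cos (θ / 2 - 3 * θ / 4) - Real.sin (5 * θ / 4 - 3 * θ / 4))) := by
  have hπ : (3:ℝ) < π := Real.pi_gt_three
  -- N is nonincreasing on the interval
  have hN : ∀ x y : ℝ, 3 * θ / 4 ≤ x → x ≤ y → y ≤ 5 * θ / 4 →
      Real.cos (5 * θ / 4 - y) - Real.sin y ≤ Real.cos (5 * θ / 4 - x) - Real.sin x := by
    intro x y hx hxy hy
    have hA : Real.cos (5*θ/4-x) - Real.cos (5*θ/4-y)
        = -2 * Real.sin (5*θ/4 - (x+y)/2) * Real.sin ((y-x)/2) := by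
      rw [Real.cos_sub_cos]; ring_nf
    have hB : Real.sin x - Real.sin y
        = -(2 * Real.sin ((y-x)/2) * Real.cos ((x+y)/2)) := by
      rw [Real.sin_sub_sin, show (x-y)/2 = -((y-x)/2) by ring, Real.sin_neg]; ring
    have hs : 0 ≤ Real.sin ((y-x)/2) :=
      Real.sin_nonneg_of_nonneg_of_le_pi (by linarith) (by linarith)
    have hbr : Real.sin (5*θ/4 - (x+y)/2) ≤ Real.cos ((x+y)/2) := by
      rw [← Real.cos_pi_div_two_sub]
      exact Real.cos_le_cos_of_nonneg_of_le_pi (by linarith) (by linarith) (by linarith)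
    nlinarith [mul_nonneg hs (sub_nonneg.2 hbr)]
  -- D is nondecreasing on the interval
  have hD : ∀ x y : ℝ, 3 * θ / 4 ≤ x → x ≤ y → y ≤ 5 * θ / 4 →
      Real.cos (θ/2 - x) - Real.sin (5*θ/4 - x) ≤
        Real.cos (θ/2 - y) - Real.sin (5*θ/4 - y) := by
    intro x y hx hxy hy
    have hA : Real.cos (θ/2-y) - Real.cos (θ/2-x)
        = -(2 * Real.sin ((x+y)/2 - θ/2) * Real.sin ((y-x)/2)) := by
      rw [Real.cos_sub_cos, show ((θ/2-y)+(θ/2-x))/2 = -((x+y)/2 - θ/2) by ring,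
        show ((θ/2-y)-(θ/2-x))/2 = -((y-x)/2) by ring, Real.sin_neg, Real.sin_neg]
      ring
    have hB : Real.sin (5*θ/4-x) - Real.sin (5*θ/4-y)
        = 2 * Real.sin ((y-x)/2) * Real.cos (5*θ/4 - (x+y)/2) := by
      rw [Real.sin_sub_sin]; ring_nf
    have hs : 0 ≤ Real.sin ((y-x)/2) :=
      Real.sin_nonneg_of_nonneg_of_le_pi (by linarith) (by linarith)
    have hbr : Real.sin ((x+y)/2 - θ/2) ≤ Real.cos (5*θ/4 - (x+y)/2) := by
      rw [← Real.cos_pi_div_two_sub]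
      exact Real.cos_le_cos_of_nonneg_of_le_pi (by linarith) (by linarith) (by linarith)
    nlinarith [mul_nonneg hs (sub_nonneg.2 hbr)]
  -- D is positive on the interval
  have hDpos : ∀ x : ℝ, 3 * θ / 4 ≤ x → x ≤ 5 * θ / 4 →
      0 < Real.cos (θ/2 - x) - Real.sin (5*θ/4 - x) := by
    intro x hx hx'
    have h0 : 0 < Real.cos (θ/2 - 3*θ/4) - Real.sin (5*θ/4 - 3*θ/4) := by
      have h1 : Real.sin (5*θ/4 - 3*θ/4) < Real.cos (θ/2 - 3*θ/4) := by
        rw [← Real.cos_pi_div_two_sub]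
        have := Real.cos_lt_cos_of_nonneg_of_le_pi (x := -(θ/2 - 3*θ/4))
          (y := π/2 - (5*θ/4 - 3*θ/4)) (by linarith) (by linarith) (by linarith)
        rwa [Real.cos_neg] at this
      linarith
    have := hD (3*θ/4) x le_rfl hx hx'
    linarith
  -- N is nonnegative on the interval
  have hNnn : ∀ x : ℝ, 3 * θ / 4 ≤ x → x ≤ 5 * θ / 4 →
      0 ≤ Real.cos (5*θ/4 - x) - Real.sin x := by
    intro x hx hx'
    have : Real.sin x ≤ Real.cos (5*θ/4 - x) := by
      rw [← Real.cos_pi_div_two_sub]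
      exact Real.cos_le_cos_of_nonneg_of_le_pi (by linarith) (by linarith) (by linarith)
    linarith
  have hanti : AntitoneOn (fun β : ℝ =>
        (Real.cos (5 * θ / 4 - β) - Real.sin β) /
          (Real.cos (θ / 2 - β) - Real.sin (5 * θ / 4 - β)))
      (Set.Icc (3 * θ / 4) (5 * θ / 4)) := by
    intro x hx y hy hxy
    simp only [Set.mem_Icc] at hx hy
    exact div_le_div₀ (by linarith [hNnn x hx.1 hx.2])
      (by linarith [hN x y hx.1 hxy hy.2])
      (hDpos x hx.1 hx.2)
      (by linarith [hD x y hx.1 hxy hy.2])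
  refine ⟨hanti, fun β hβ => ?_⟩
  have h0 : (3*θ/4) ∈ Set.Icc (3 * θ / 4) (5 * θ / 4) :=
    Set.mem_Icc.2 ⟨le_rfl, by linarith⟩
  exact hanti h0 hβ (Set.mem_Icc.1 hβ).1
end

section
/- For all θ with 0 < θ ≤ 2π/7, the function (cos(θ/4 − β) − sin β)/(cos(θ/2 − β) − sin(3θ/4 − β)) is decreasing in β for 0 ≤ β ≤ θ/4, so it is maximized at β = 0 where it equals cos(θ/4)/(cos(θ/2) − sin(3θ/4)). -/
open Real

theorem stmt10 (θ : ℝ) (hθ0 : 0 < θ) (hθ : θ ≤ 2 * π / 7) :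
    AntitoneOn (fun β : ℝ =>
        (Real.cos (θ / 4 - β) - Real.sin β) /
          (Real.cos (θ / 2 - β) - Real.sin (3 * θ / 4 - β)))
      (Set.Icc 0 (θ / 4)) ∧
    (∀ β ∈ Set.Icc (0 : ℝ) (θ / 4),
      (Real.cos (θ / 4 - β) - Real.sin β) /
          (Real.cos (θ / 2 - β) - Real.sin (3 * θ / 4 - β)) ≤
        Real.cos (θ / 4) / (Real.cos (θ / 2) - Real.sin (3 * θ / 4))) ∧
    (Real.cos (θ / 4 - 0) - Real.sin 0) /
        (Real.cos (θ / 2 - 0) - Real.sin (3 * θ / 4 - 0)) =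
      Real.cos (θ / 4) / (Real.cos (θ / 2) - Real.sin (3 * θ / 4)) := by
  have hπ := Real.pi_pos
  have hθ8 : θ / 8 ≤ π / 28 := by linarith
  have hN : ∀ β : ℝ, Real.cos (θ / 4 - β) - Real.sin β
      = 2 * Real.sin (π / 4 - θ / 8) * Real.sin (θ / 8 - β + π / 4) := by
    intro β
    rw [← Real.cos_pi_div_two_sub β, Real.cos_sub_cos]
    have h1 : (θ / 4 - β + (π / 2 - β)) / 2 = θ / 8 - β + π / 4 := by ring
    have h2 : (θ / 4 - β - (π / 2 - β)) / 2 = -(π / 4 - θ / 8) := by ring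
    rw [h1, h2, Real.sin_neg]; ring
  have hD : ∀ β : ℝ, Real.cos (θ / 2 - β) - Real.sin (3 * θ / 4 - β)
      = 2 * Real.sin (π / 4 - θ / 8) * Real.sin (π / 4 + β - 5 * θ / 8) := by
    intro β
    rw [← Real.cos_pi_div_two_sub (3 * θ / 4 - β), Real.cos_sub_cos]
    have h1 : (θ / 2 - β + (π / 2 - (3 * θ / 4 - β))) / 2 = π / 4 - θ / 8 := by ring
    have h2 : (θ / 2 - β - (π / 2 - (3 * θ / 4 - β))) / 2 = -(π / 4 + β - 5 * θ / 8) := by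
      ring
    rw [h1, h2, Real.sin_neg]; ring
  have hs : 0 < Real.sin (π / 4 - θ / 8) :=
    Real.sin_pos_of_pos_of_lt_pi (by linarith) (by linarith)
  have sinmono : ∀ a b : ℝ, -(π/2) ≤ a → a ≤ b → b ≤ π/2 → Real.sin a ≤ Real.sin b := by
    intro a b ha hab hb
    exact Real.strictMonoOn_sin.monotoneOn ⟨ha, by linarith⟩ ⟨by linarith, hb⟩ hab
  have key : AntitoneOn (fun β : ℝ =>
        (Real.cos (θ / 4 - β) - Real.sin β) /
          (Real.cos (θ / 2 - β) - Real.sin (3 * θ / 4 - β)))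
      (Set.Icc 0 (θ / 4)) := by
    intro x hx y hy hxy
    obtain ⟨hx0, hx1⟩ := hx
    obtain ⟨hy0, hy1⟩ := hy
    simp only
    rw [hN x, hN y, hD x, hD y]
    have hNy0 : 0 ≤ Real.sin (θ / 8 - y + π / 4) :=
      (Real.sin_pos_of_pos_of_lt_pi (by linarith) (by linarith)).le
    have hNx0 : 0 ≤ Real.sin (θ / 8 - x + π / 4) :=
      (Real.sin_pos_of_pos_of_lt_pi (by linarith) (by linarith)).le
    have hDx0 : 0 < Real.sin (π / 4 + x - 5 * θ / 8) :=
      Real.sin_pos_of_pos_of_lt_pi (by linarith) (by linarith)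
    have hNle : Real.sin (θ / 8 - y + π / 4) ≤ Real.sin (θ / 8 - x + π / 4) :=
      sinmono _ _ (by linarith) (by linarith) (by linarith)
    have hDle : Real.sin (π / 4 + x - 5 * θ / 8) ≤ Real.sin (π / 4 + y - 5 * θ / 8) :=
      sinmono _ _ (by linarith) (by linarith) (by linarith)
    apply div_le_div₀ (by positivity)
    · nlinarith
    · positivity
    · nlinarith
  refine ⟨key, ?_, by norm_num⟩
  intro β hβ
  have h0 : (0:ℝ) ∈ Set.Icc (0:ℝ) (θ / 4) := ⟨le_refl _, by linarith⟩
  have := key h0 hβ hβ.1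
  simpa using this
end
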